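/- Suppose char(k) = 0. Then k((F)) is a subfield of k((G)) if and only if F satisfies (S2) closure under subsets, (S3) closure under finite unions, (S4) {0} ∈ F, (A2) closure under sumsets, (A4) for A ∈ F with A ⊆ G^{≥0}, the set of finite sums of elements of A belongs to F, and (A5) {g} ∈ F implies {−g} ∈ F. -/

import Mathlib

open scoped Pointwise

open scoped Pointwise

namespace KHullAux

open HahnSeries Finset

variable {G : Type*} [AddCommGroup G] [LinearOrder G] [IsOrderedAddMonoid G]

/-- Indicator Hahn series of a PWO set with constant coefficient `c`. -/
noncomputable def ind (k : Type*) [Field k] (A : Set G) (hA : A.IsPWO) (c : k) :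
    HahnSeries G k where
  coeff := A.indicator fun _ => c
  isPWO_support' := hA.mono (by
    rw [Set.support_indicator]
    exact Set.inter_subset_left)

@[simp] lemma ind_coeff {k : Type*} [Field k] {A : Set G} {hA : A.IsPWO} {c : k} {g : G} :
    (ind k A hA c).coeff g = A.indicator (fun _ => c) g := rfl

lemma ind_coeff_of_mem {k : Type*} [Field k] {A : Set G} {hA : A.IsPWO} {c : k} {g : G}
    (hg : g ∈ A) : (ind k A hA c).coeff g = c := by
  rw [ind_coeff, Set.indicator_of_mem hg]

lemma ind_coeff_of_not_mem {k : Type*} [Field k] {A : Set G} {hA : A.IsPWO} {c : k} {g : G}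
    (hg : g ∉ A) : (ind k A hA c).coeff g = 0 := by
  rw [ind_coeff, Set.indicator_of_notMem hg]

lemma support_ind {k : Type*} [Field k] {A : Set G} {hA : A.IsPWO} {c : k} (hc : c ≠ 0) :
    (ind k A hA c).support = A := by
  ext g
  constructor
  · intro hg
    by_contra h
    exact hg (ind_coeff_of_not_mem h)
  · intro hg
    rw [HahnSeries.mem_support, ind_coeff_of_mem hg]
    exact hc

/-- Support of a power lies in the additive closure of the support. -/
lemma support_pow_subset_closure {k : Type*} [Field k] (x : HahnSeries G k) (n : ℕ) :
    (x ^ n).support ⊆ (AddSubmonoid.closure x.support : Set G) := by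
  induction n with
  | zero =>
      intro g hg
      rw [pow_zero, HahnSeries.support_one] at hg
      simp only [Set.mem_singleton_iff] at hg
      rw [hg]
      exact AddSubmonoid.zero_mem _
  | succ n ih =>
      intro g hg
      rw [pow_succ] at hg
      obtain ⟨i, hi, j, hj, rfl⟩ := support_mul_subset hg
      exact AddSubmonoid.add_mem _ (ih hi) (AddSubmonoid.subset_closure hj)

section RatSide

lemma mul_coeff_nonneg {x y : HahnSeries G ℚ} (hx : ∀ g, 0 ≤ x.coeff g)
    (hy : ∀ g, 0 ≤ y.coeff g) (g : G) : 0 ≤ (x * y).coeff g := by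
  rw [HahnSeries.coeff_mul]
  exact Finset.sum_nonneg fun ij _ => mul_nonneg (hx _) (hy _)

lemma pow_coeff_nonneg {x : HahnSeries G ℚ} (hx : ∀ g, 0 ≤ x.coeff g) (n : ℕ) (g : G) :
    0 ≤ (x ^ n).coeff g := by
  induction n generalizing g with
  | zero =>
      rw [pow_zero, HahnSeries.coeff_one]
      split <;> norm_num
  | succ n ih =>
      rw [pow_succ]
      exact mul_coeff_nonneg ih hx g

lemma mul_coeff_le {x y : HahnSeries G ℚ} (hx : ∀ g, 0 ≤ x.coeff g)
    (hy : ∀ g, 0 ≤ y.coeff g) (a b : G) :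
    x.coeff a * y.coeff b ≤ (x * y).coeff (a + b) := by
  by_cases ha : x.coeff a = 0
  · rw [ha, zero_mul]
    exact mul_coeff_nonneg hx hy _
  by_cases hb : y.coeff b = 0
  · rw [hb, mul_zero]
    exact mul_coeff_nonneg hx hy _
  rw [HahnSeries.coeff_mul]
  have hmem : ((a, b) : G × G) ∈
      Finset.antidiagonal x.isPWO_support y.isPWO_support (a + b) := by
    rw [Finset.mem_antidiagonal]
    exact ⟨ha, hb, rfl⟩
  exact Finset.single_le_sum (fun ij _ => mul_nonneg (hx _) (hy _)) hmem

lemma exists_pow_coeff_pos {x : HahnSeries G ℚ} (hx : ∀ g, 0 ≤ x.coeff g) {g : G}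
    (hg : g ∈ AddSubmonoid.closure x.support) : ∃ n, 0 < (x ^ n).coeff g := by
  refine AddSubmonoid.closure_induction ?_ ?_ ?_ hg
  · intro b hb
    exact ⟨1, by rw [pow_one]; exact lt_of_le_of_ne (hx b) (Ne.symm hb)⟩
  · refine ⟨0, ?_⟩
    rw [pow_zero, HahnSeries.coeff_one, if_pos rfl]
    norm_num
  · intro a b _ _ iha ihb
    obtain ⟨m, hm⟩ := iha
    obtain ⟨n, hn⟩ := ihb
    refine ⟨m + n, lt_of_lt_of_le (mul_pos hm hn) ?_⟩
    rw [_root_.pow_add]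
    exact mul_coeff_le (pow_coeff_nonneg hx m) (pow_coeff_nonneg hx n) a b

lemma one_sub_ind_ne_zero {k : Type*} [Field k] {B : Set G} (hB : B.IsPWO)
    (hBpos : ∀ b ∈ B, 0 < b) : (1 : HahnSeries G k) - ind k B hB 1 ≠ 0 := by
  intro h
  have h0 : ((1 : HahnSeries G k) - ind k B hB 1).coeff 0 = 1 := by
    rw [HahnSeries.coeff_sub, HahnSeries.coeff_one, if_pos rfl,
      ind_coeff_of_not_mem (fun h0 => lt_irrefl (0 : G) (hBpos 0 h0)), sub_zero]
  rw [h] at h0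
  simp at h0

lemma support_inv_one_sub_rat {B : Set G} (hB : B.IsPWO) (hBpos : ∀ b ∈ B, 0 < b) :
    ((1 : HahnSeries G ℚ) - ind ℚ B hB 1)⁻¹.support = (AddSubmonoid.closure B : Set G) := by
  set q := ind ℚ B hB 1 with hqdef
  have hsupp : q.support = B := support_ind one_ne_zero
  have hq : 0 < q.orderTop := by
    by_cases h0 : q = 0
    · rw [h0, HahnSeries.orderTop_zero]
      exact WithTop.coe_lt_top 0
    · apply HahnSeries.zero_lt_orderTop_of_order
      have : q.order ∈ q.support := HahnSeries.coeff_order_eq_zero.not.mpr h0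
      rw [hsupp] at this
      exact hBpos _ this
  set s := HahnSeries.SummableFamily.powers q with hsdef
  have hsn : ∀ n, s n = q ^ n := fun n =>
    congrFun (HahnSeries.SummableFamily.coe_powers hq) n
  have hmul : (1 - q) * s.hsum = 1 :=
    HahnSeries.SummableFamily.one_sub_self_mul_hsum_powers hq
  have hinv : (1 - q)⁻¹ = s.hsum := inv_eq_of_mul_eq_one_right hmul
  rw [hinv]
  apply Set.Subset.antisymm
  · refine HahnSeries.SummableFamily.support_hsum_subset.trans ?_
    refine Set.iUnion_subset fun n => ?_
    rw [hsn n, ← hsupp]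
    exact support_pow_subset_closure q n
  · intro g hg
    have hx : ∀ g, 0 ≤ q.coeff g := fun g => by
      rw [hqdef, ind_coeff]
      exact Set.indicator_nonneg (fun _ _ => zero_le_one) g
    obtain ⟨n, hn⟩ := exists_pow_coeff_pos hx (by rw [hsupp]; exact hg)
    rw [HahnSeries.mem_support, HahnSeries.SummableFamily.coeff_hsum]
    have hfin := s.finite_co_support g
    rw [finsum_eq_sum _ hfin]
    have hpos : 0 < ∑ i ∈ hfin.toFinset, (s i).coeff g := by
      apply Finset.sum_pos'
      · intro i _
        rw [hsn i]
        exact pow_coeff_nonneg hx i g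
      · refine ⟨n, ?_, ?_⟩
        · refine (Set.Finite.mem_toFinset (hs := hfin)).mpr ?_
          show (s n).coeff g ≠ 0
          rw [hsn n]
          exact ne_of_gt hn
        · rw [hsn n]
          exact hn
    exact ne_of_gt hpos

variable {k : Type*} [Field k] [CharZero k]

lemma map_support (x : HahnSeries G ℚ) :
    (x.map (Rat.castHom k)).support = x.support := by
  ext g
  simp [HahnSeries.mem_support, HahnSeries.map_coeff]

lemma map_sub' (x y : HahnSeries G ℚ) :
    ((x - y).map (Rat.castHom k)) = x.map (Rat.castHom k) - y.map (Rat.castHom k) := by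
  ext g
  simp [HahnSeries.map_coeff, HahnSeries.coeff_sub]

lemma map_one' : ((1 : HahnSeries G ℚ)).map (Rat.castHom k) = 1 := by
  ext g
  rw [HahnSeries.map_coeff, HahnSeries.coeff_one, HahnSeries.coeff_one]
  split <;> simp

lemma map_mul' (x y : HahnSeries G ℚ) :
    ((x * y).map (Rat.castHom k)) = x.map (Rat.castHom k) * y.map (Rat.castHom k) :=
  HahnSeries.map_mul ((Rat.castHom k) : ℚ →ₙ+* k)

lemma map_inv' (x : HahnSeries G ℚ) (hx : x ≠ 0) :
    ((x⁻¹).map (Rat.castHom k)) = (x.map (Rat.castHom k))⁻¹ := by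
  symm
  apply inv_eq_of_mul_eq_one_right
  rw [← map_mul', mul_inv_cancel₀ hx, map_one']

lemma support_inv_one_sub_ind {B : Set G} (hB : B.IsPWO) (hBpos : ∀ b ∈ B, 0 < b) :
    ((1 : HahnSeries G k) - ind k B hB 1)⁻¹.support = (AddSubmonoid.closure B : Set G) := by
  have hmapind : (ind ℚ B hB 1).map (Rat.castHom k) = ind k B hB 1 := by
    ext g
    rw [HahnSeries.map_coeff]
    by_cases h : g ∈ B
    · rw [ind_coeff_of_mem h, ind_coeff_of_mem h]
      exact map_one _
    · rw [ind_coeff_of_not_mem h, ind_coeff_of_not_mem h]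
      exact map_zero _
  have key : ((1 : HahnSeries G k) - ind k B hB 1) =
      ((1 : HahnSeries G ℚ) - ind ℚ B hB 1).map (Rat.castHom k) := by
    rw [map_sub', map_one', hmapind]
  rw [key, ← map_inv' _ (one_sub_ind_ne_zero hB hBpos), map_support,
    support_inv_one_sub_rat hB hBpos]

end RatSide

section Inversion

variable {k : Type*} [Field k]

lemma support_z_pos (x : HahnSeries G k) (hx : x ≠ 0) :
    ∀ g ∈ ((1 : HahnSeries G k) -
      (HahnSeries.single (-x.order)) x.leadingCoeff⁻¹ * x).support, 0 < g := by
  intro g hg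
  have hpos := HahnSeries.unit_aux x
    (inv_mul_cancel₀ (HahnSeries.leadingCoeff_ne_zero.mpr hx)) _ (neg_add_cancel x.order)
  have hle := HahnSeries.orderTop_le_of_coeff_ne_zero hg
  have := lt_of_lt_of_le hpos hle
  exact_mod_cast this

lemma support_inv_subset (x : HahnSeries G k) (hx : x ≠ 0) :
    x⁻¹.support ⊆ {-x.order} + (AddSubmonoid.closure
      ((1 - (HahnSeries.single (-x.order)) x.leadingCoeff⁻¹ * x).support) : Set G) := by
  have hr : x.leadingCoeff⁻¹ * x.leadingCoeff = 1 :=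
    inv_mul_cancel₀ (HahnSeries.leadingCoeff_ne_zero.mpr hx)
  have hpos := HahnSeries.unit_aux x hr _ (neg_add_cancel x.order)
  set z := (1 : HahnSeries G k) - (HahnSeries.single (-x.order)) x.leadingCoeff⁻¹ * x with hz
  set s := HahnSeries.SummableFamily.powers z with hsdef
  have hmul : (1 - z) * s.hsum = 1 :=
    HahnSeries.SummableFamily.one_sub_self_mul_hsum_powers hpos
  have h1z : (1 : HahnSeries G k) - z =
      (HahnSeries.single (-x.order)) x.leadingCoeff⁻¹ * x := by
    rw [hz]; ring
  have hxinv : x⁻¹ = (HahnSeries.single (-x.order)) x.leadingCoeff⁻¹ * s.hsum := by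
    apply inv_eq_of_mul_eq_one_right
    rw [← mul_assoc, mul_comm x ((HahnSeries.single (-x.order)) x.leadingCoeff⁻¹), ← h1z, hmul]
  rw [hxinv]
  refine HahnSeries.support_mul_subset.trans ?_
  apply Set.add_subset_add HahnSeries.support_single_subset
  refine HahnSeries.SummableFamily.support_hsum_subset.trans ?_
  refine Set.iUnion_subset fun n => ?_
  have hsn : s n = z ^ n := congrFun (HahnSeries.SummableFamily.coe_powers hpos) n
  rw [hsn]
  exact support_pow_subset_closure z n

end Inversion

end KHullAux

/-- Suppose `char k = 0`. Then the `k`-hull `k((F))` is a subfield of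
`k((G))` if and only if `F` satisfies (S2) closure under subsets, (S3) closure under finite
unions, (S4) `{0} ∈ F`, (A2) closure under sumsets, (A4) for `A ∈ F` with `A ⊆ G^{≥0}` the
set of finite sums of elements of `A` belongs to `F`, and (A5) `{g} ∈ F → {−g} ∈ F`. -/
theorem khull_subfield_iff_charZero
    {G : Type*} [AddCommGroup G] [LinearOrder G] [IsOrderedAddMonoid G] {k : Type*} [Field k] [CharZero k]
    (F : Set (Set G)) (hWF : ∀ A ∈ F, A.IsWF) :
    (∃ K : Subfield (HahnSeries G k),
        (K : Set (HahnSeries G k)) = {a : HahnSeries G k | a.support ∈ F}) ↔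
      ((∀ A ∈ F, ∀ B ⊆ A, B ∈ F) ∧
       (∀ A ∈ F, ∀ B ∈ F, A ∪ B ∈ F) ∧
       (({0} : Set G) ∈ F) ∧
       (∀ A ∈ F, ∀ B ∈ F, A + B ∈ F) ∧
       (∀ A ∈ F, A ⊆ {g : G | 0 ≤ g} → (AddSubmonoid.closure A : Set G) ∈ F) ∧
       (∀ g : G, ({g} : Set G) ∈ F → ({-g} : Set G) ∈ F)) := by
  constructor
  · rintro ⟨K, hK⟩
    have hmem : ∀ a : HahnSeries G k, a ∈ K ↔ a.support ∈ F := fun a => by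
      rw [← SetLike.mem_coe, hK]; exact Iff.rfl
    -- (S2)
    have hS2 : ∀ A ∈ F, ∀ B ⊆ A, B ∈ F := by
      intro A hA B hB
      have hA' : A.IsPWO := (hWF A hA).isPWO
      have hB' : B.IsPWO := hA'.mono hB
      set u := KHullAux.ind k A hA' 1 with hu
      set w := KHullAux.ind k B hB' 1 with hw
      have hus : u.support = A := KHullAux.support_ind one_ne_zero
      have hws : w.support = B := KHullAux.support_ind one_ne_zero
      have huw : (u + w).support = A := by
        ext g
        constructor
        · intro hg
          have := HahnSeries.support_add_subset _ _ hg
          rw [hus, hws] at this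
          rcases this with h | h
          · exact h
          · exact hB h
        · intro hg
          rw [HahnSeries.mem_support, HahnSeries.coeff_add, KHullAux.ind_coeff_of_mem hg]
          by_cases hgB : g ∈ B
          · rw [KHullAux.ind_coeff_of_mem hgB]
            norm_num
          · rw [KHullAux.ind_coeff_of_not_mem hgB, add_zero]
            exact one_ne_zero
      have hu_mem : u ∈ K := (hmem u).mpr (by rw [hus]; exact hA)
      have huw_mem : u + w ∈ K := (hmem _).mpr (by rw [huw]; exact hA)
      have hw_mem : w ∈ K := by
        have h : w = (u + w) - u := by ring
        rw [h]
        exact sub_mem huw_mem hu_mem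
      have := (hmem w).mp hw_mem
      rwa [hws] at this
    -- (S4)
    have hS4 : ({0} : Set G) ∈ F := by
      have := (hmem 1).mp (one_mem K)
      rwa [HahnSeries.support_one] at this
    -- (S3)
    have hS3 : ∀ A ∈ F, ∀ B ∈ F, A ∪ B ∈ F := by
      intro A hA B hB
      have hA' : A.IsPWO := (hWF A hA).isPWO
      have hB' : B.IsPWO := (hWF B hB).isPWO
      set u := KHullAux.ind k A hA' 1 with hu
      set v := KHullAux.ind k B hB' 2 with hv
      have hus : u.support = A := KHullAux.support_ind one_ne_zero
      have hvs : v.support = B := KHullAux.support_ind (by norm_num)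
      have huv : (u + v).support = A ∪ B := by
        ext g
        constructor
        · intro hg
          have := HahnSeries.support_add_subset _ _ hg
          rwa [hus, hvs] at this
        · intro hg
          rw [HahnSeries.mem_support, HahnSeries.coeff_add]
          by_cases hgA : g ∈ A <;> by_cases hgB : g ∈ B
          · rw [KHullAux.ind_coeff_of_mem hgA, KHullAux.ind_coeff_of_mem hgB]
            norm_num
          · rw [KHullAux.ind_coeff_of_mem hgA, KHullAux.ind_coeff_of_not_mem hgB]
            norm_num
          · rw [KHullAux.ind_coeff_of_not_mem hgA, KHullAux.ind_coeff_of_mem hgB]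
            norm_num
          · rcases hg with h | h
            · exact absurd h hgA
            · exact absurd h hgB
      have hu_mem : u ∈ K := (hmem u).mpr (by rw [hus]; exact hA)
      have hv_mem : v ∈ K := (hmem v).mpr (by rw [hvs]; exact hB)
      have := (hmem _).mp (add_mem hu_mem hv_mem)
      rwa [huv] at this
    -- (A2)
    have hA2 : ∀ A ∈ F, ∀ B ∈ F, A + B ∈ F := by
      intro A hA B hB
      have hA' : A.IsPWO := (hWF A hA).isPWO
      have hB' : B.IsPWO := (hWF B hB).isPWO
      set u := KHullAux.ind k A hA' 1 with hu
      set v := KHullAux.ind k B hB' 1 with hv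
      have hus : u.support = A := KHullAux.support_ind one_ne_zero
      have hvs : v.support = B := KHullAux.support_ind one_ne_zero
      have huv : (u * v).support = A + B := by
        ext g
        rw [HahnSeries.mem_support, HahnSeries.coeff_mul]
        constructor
        · intro hg
          obtain ⟨ij, hij, _⟩ := Finset.exists_ne_zero_of_sum_ne_zero hg
          rw [Finset.mem_antidiagonal, hus, hvs] at hij
          exact Set.mem_add.mpr ⟨ij.1, hij.1, ij.2, hij.2.1, hij.2.2⟩
        · intro hg
          obtain ⟨a, ha, b, hb, rfl⟩ := Set.mem_add.mp hg
          have hterm : ∀ ij ∈ Finset.antidiagonal u.isPWO_support v.isPWO_support (a + b),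
              u.coeff ij.1 * v.coeff ij.2 = 1 := by
            intro ij hij
            rw [Finset.mem_antidiagonal, hus, hvs] at hij
            rw [KHullAux.ind_coeff_of_mem hij.1, KHullAux.ind_coeff_of_mem hij.2.1, one_mul]
          rw [Finset.sum_congr rfl hterm, Finset.sum_const, nsmul_eq_mul, mul_one]
          have hne : (Finset.antidiagonal u.isPWO_support v.isPWO_support (a + b)).Nonempty := by
            refine ⟨(a, b), ?_⟩
            rw [Finset.mem_antidiagonal, hus, hvs]
            exact ⟨ha, hb, rfl⟩
          exact Nat.cast_ne_zero.mpr (Finset.card_ne_zero.mpr hne)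
      have hu_mem : u ∈ K := (hmem u).mpr (by rw [hus]; exact hA)
      have hv_mem : v ∈ K := (hmem v).mpr (by rw [hvs]; exact hB)
      have := (hmem _).mp (mul_mem hu_mem hv_mem)
      rwa [huv] at this
    -- (A4)
    have hA4 : ∀ A ∈ F, A ⊆ {g : G | 0 ≤ g} → (AddSubmonoid.closure A : Set G) ∈ F := by
      intro A hA hApos
      set B := A \ {0} with hBdef
      have hBF : B ∈ F := hS2 A hA B Set.diff_subset
      have hB' : B.IsPWO := (hWF A hA).isPWO.mono Set.diff_subset
      have hBpos : ∀ b ∈ B, 0 < b := fun b hb =>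
        lt_of_le_of_ne (hApos hb.1) (fun h => hb.2 (by simp [← h]))
      have hxmem : KHullAux.ind k B hB' 1 ∈ K :=
        (hmem _).mpr (by rw [KHullAux.support_ind one_ne_zero]; exact hBF)
      have hinvmem : ((1 : HahnSeries G k) - KHullAux.ind k B hB' 1)⁻¹ ∈ K :=
        inv_mem (sub_mem (one_mem K) hxmem)
      have hsup := (hmem _).mp hinvmem
      rw [KHullAux.support_inv_one_sub_ind hB' hBpos] at hsup
      have hclo : AddSubmonoid.closure B = AddSubmonoid.closure A := by
        apply le_antisymm
        · exact AddSubmonoid.closure_mono Set.diff_subset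
        · rw [AddSubmonoid.closure_le]
          intro a ha
          by_cases h0 : a = 0
          · rw [h0]
            exact AddSubmonoid.zero_mem _
          · exact AddSubmonoid.subset_closure ⟨ha, h0⟩
      rwa [hclo] at hsup
    -- (A5)
    have hA5 : ∀ g : G, ({g} : Set G) ∈ F → ({-g} : Set G) ∈ F := by
      intro g hg
      have h1 : (HahnSeries.single g (1 : k)).support = {g} :=
        HahnSeries.support_single_of_ne one_ne_zero
      have hmem1 : HahnSeries.single g (1 : k) ∈ K := (hmem _).mpr (by rw [h1]; exact hg)
      have hinv : (HahnSeries.single g (1 : k))⁻¹ = HahnSeries.single (-g) 1 := by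
        apply inv_eq_of_mul_eq_one_right
        rw [HahnSeries.single_mul_single, add_neg_cancel, mul_one]
        rfl
      have := (hmem _).mp (inv_mem hmem1)
      rwa [hinv, HahnSeries.support_single_of_ne one_ne_zero] at this
    exact ⟨hS2, hS3, hS4, hA2, hA4, hA5⟩
  · rintro ⟨hS2, hS3, hS4, hA2, hA4, hA5⟩
    have hInv : ∀ a : HahnSeries G k, a.support ∈ F → a⁻¹.support ∈ F := by
      intro a hsupp
      by_cases ha : a = 0
      · rw [ha, inv_zero, HahnSeries.support_zero]
        exact hS2 _ hS4 _ (Set.empty_subset _)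
      · have horder : a.order ∈ a.support := HahnSeries.coeff_order_eq_zero.not.mpr ha
        have hsing : ({a.order} : Set G) ∈ F :=
          hS2 _ hsupp _ (Set.singleton_subset_iff.mpr horder)
        have hneg : ({-a.order} : Set G) ∈ F := hA5 _ hsing
        set z := (1 : HahnSeries G k) -
          (HahnSeries.single (-a.order)) a.leadingCoeff⁻¹ * a with hz
        have hzsub : z.support ⊆ ({0} : Set G) ∪ ({-a.order} + a.support) := by
          have h1 : z.support ⊆ (1 : HahnSeries G k).support ∪
              ((HahnSeries.single (-a.order)) a.leadingCoeff⁻¹ * a).support := by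
            rw [hz, sub_eq_add_neg]
            refine (HahnSeries.support_add_subset _ _).trans ?_
            rw [HahnSeries.support_neg]
          refine h1.trans (Set.union_subset_union ?_ ?_)
          · rw [HahnSeries.support_one]
          · refine HahnSeries.support_mul_subset.trans ?_
            exact Set.add_subset_add HahnSeries.support_single_subset subset_rfl
        have hzF : z.support ∈ F := hS2 _ (hS3 _ hS4 _ (hA2 _ hneg _ hsupp)) _ hzsub
        have hznn : z.support ⊆ {g : G | 0 ≤ g} := fun g hg =>
          le_of_lt (KHullAux.support_z_pos a ha g hg)
        have hcloF : (AddSubmonoid.closure z.support : Set G) ∈ F := hA4 _ hzF hznn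
        have hfin : ({-a.order} + (AddSubmonoid.closure z.support : Set G)) ∈ F :=
          hA2 _ hneg _ hcloF
        exact hS2 _ hfin _ (KHullAux.support_inv_subset a ha)
    refine ⟨{ carrier := {a : HahnSeries G k | a.support ∈ F}
              zero_mem' := by
                show (0 : HahnSeries G k).support ∈ F
                rw [HahnSeries.support_zero]
                exact hS2 _ hS4 _ (Set.empty_subset _)
              one_mem' := by
                show (1 : HahnSeries G k).support ∈ F
                rw [HahnSeries.support_one]
                exact hS4
              add_mem' := fun {a b} ha hb => by
                exact hS2 _ (hS3 _ ha _ hb) _ (HahnSeries.support_add_subset _ _)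
              neg_mem' := fun {a} ha => by
                show (-a).support ∈ F
                rw [HahnSeries.support_neg]
                exact ha
              mul_mem' := fun {a b} ha hb => by
                exact hS2 _ (hA2 _ ha _ hb) _ HahnSeries.support_mul_subset
              inv_mem' := fun a ha => hInv a ha }, rfl⟩
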